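/- Let (α,β) ∈ U and let (m̄_k)_{k≥1} be a nondecreasing sequence of integers with m̄_1 ≥ 1 (and m̄_0 := 0). If the point β follows the pattern R L^{m_1} R L^{m_2} R L^{m_3} ⋯ under T_{α,β} (i.e. the kneading sequence of T_{α,β} is R L^{m_1} R L^{m_2} ⋯), then Θ(α,β) = 0, i.e. 1 − β + Σ_{k=1}^∞ ((α−1)/β)^k (α/β)^{m̄_k} = 0. -/

import Mathlib

/-- The skew tent map `T_{α,β}`. -/
noncomputable def T (α β x : ℝ) : ℝ :=
  if x ≤ α then β / α * x else β / (1 - α) * (1 - x)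

/-- The auxiliary function `Θ` associated to the sequence `m̄` (with `m̄ 0 = 0`):
`Θ(α,β) = 1 - β + ∑_{k=1}^∞ ((α-1)/β)^k (α/β)^{m̄_k}`. -/
noncomputable def theta (m : ℕ → ℕ) (α β : ℝ) : ℝ :=
  1 - β + ∑' k : ℕ, ((α - 1) / β) ^ (k + 1) * (α / β) ^ (m (k + 1))

/-- If `(α,β) ∈ U` and `β` follows the pattern `R L^{m_1} R L^{m_2} ⋯` under `T_{α,β}`,
then `Θ(α,β) = 0`. -/
theorem stmt0 (α β : ℝ) (hβ1 : 1 / 2 < β) (hβ2 : β ≤ 1)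
    (hα1 : 1 - β < α) (hα2 : α < β)
    (m : ℕ → ℕ) (hm0 : m 0 = 0) (hm1 : 1 ≤ m 1) (hmono : Monotone m)
    (hpat : ∀ n : ℕ,
      ((∃ k : ℕ, n = k + m k) → α < (T α β)^[n] β) ∧
      ((¬ ∃ k : ℕ, n = k + m k) → (T α β)^[n] β < α)) :
    theta m α β = 0 := by
  have hβ0 : 0 < β := by linarith
  have hα0 : 0 < α := by linarith
  have hα1' : α < 1 := lt_of_lt_of_le hα2 hβ2
  set c : ℝ := (1 - α) / β with hc
  set q : ℝ := α / β with hq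
  have hc0 : 0 < c := div_pos (by linarith) hβ0
  have hc1 : c < 1 := (div_lt_one hβ0).2 (by linarith)
  have hq0 : 0 < q := div_pos hα0 hβ0
  have hq1 : q < 1 := (div_lt_one hβ0).2 hα2
  set x : ℕ → ℝ := fun n => (T α β)^[n] β with hx
  have hx0 : x 0 = β := rfl
  have hxsucc : ∀ n, x (n + 1) = T α β (x n) := fun n =>
    Function.iterate_succ_apply' _ _ _
  -- all iterates lie in [0,1]
  have hbound : ∀ n, 0 ≤ x n ∧ x n ≤ 1 := by
    intro n
    induction n with
    | zero => exact ⟨by linarith, hβ2⟩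
    | succ n ih =>
      obtain ⟨h0, h1⟩ := ih
      rw [hxsucc]
      unfold T
      split_ifs with h
      · constructor
        · exact mul_nonneg (div_pos hβ0 hα0).le h0
        · have : β / α * x n ≤ β / α * α :=
            mul_le_mul_of_nonneg_left h (div_pos hβ0 hα0).le
          rw [div_mul_cancel₀ _ (ne_of_gt hα0)] at this
          linarith
      · push_neg at h
        constructor
        · have : (0:ℝ) ≤ β / (1 - α) := (div_pos hβ0 (by linarith)).le
          nlinarith
        · have h2 : 1 - x n ≤ 1 - α := by linarith
          have : β / (1 - α) * (1 - x n) ≤ β / (1 - α) * (1 - α) :=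
            mul_le_mul_of_nonneg_left h2 (div_pos hβ0 (by linarith)).le
          rw [div_mul_cancel₀ _ (by linarith : (1:ℝ) - α ≠ 0)] at this
          linarith
  -- local step relations
  have hLstep : ∀ n, x n < α → x n = q * x (n + 1) := by
    intro n hn
    rw [hxsucc]
    unfold T
    rw [if_pos (le_of_lt hn)]
    rw [hq]
    field_simp
  have hRstep : ∀ n, α < x n → x n = 1 - c * x (n + 1) := by
    intro n hn
    rw [hxsucc]
    unfold T
    rw [if_neg (not_le.2 hn)]
    have h1 : (1 - α) / β * (β / (1 - α)) = 1 := by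
      field_simp
      exact div_self (by linarith)
    rw [hc, ← mul_assoc, h1]
    ring
  -- runs of L's
  have hLrun : ∀ j n, (∀ i, i < j → x (n + i) < α) → x n = q ^ j * x (n + j) := by
    intro j
    induction j with
    | zero => intro n _; simp
    | succ j ih =>
      intro n hL
      have h1 : x n = q ^ j * x (n + j) := ih n (fun i hi => hL i (by omega))
      have h2 : x (n + j) = q * x (n + j + 1) :=
        hLstep _ (hL j (by omega))
      rw [h1, h2]
      rw [show n + (j + 1) = n + j + 1 by omega]
      ring
  set g : ℕ → ℕ := fun k => k + m k with hg
  have hgmono : StrictMono g := by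
    apply strictMono_nat_of_lt_succ
    intro k
    have := hmono (by omega : k ≤ k + 1)
    simp only [hg, Nat.succ_eq_add_one]
    omega
  have hR : ∀ k, α < x (g k) := fun k => (hpat (g k)).1 ⟨k, rfl⟩
  have hL : ∀ k n, g k < n → n < g (k + 1) → x n < α := by
    intro k n h1 h2
    apply (hpat n).2
    rintro ⟨k', rfl⟩
    have hk1 : k < k' := hgmono.lt_iff_lt.1 h1
    have hk2 : k' < k + 1 := hgmono.lt_iff_lt.1 h2
    omega
  -- recursion along R positions
  have hrec : ∀ k, x (g k) = 1 - c * (q ^ (m (k + 1) - m k) * x (g (k + 1))) := by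
    intro k
    have hmk : m k ≤ m (k + 1) := hmono (Nat.le_succ k)
    have hgk1 : g (k + 1) = g k + 1 + (m (k + 1) - m k) := by
      simp only [hg]; omega
    have h1 : x (g k) = 1 - c * x (g k + 1) := hRstep _ (hR k)
    have h2 : x (g k + 1) = q ^ (m (k + 1) - m k) * x (g k + 1 + (m (k + 1) - m k)) := by
      apply hLrun
      intro i hi
      apply hL k
      · omega
      · omega
    rw [h1, h2, ← hgk1]
  -- partial sums identity
  have hkey : ∀ N, β = (∑ j ∈ Finset.range N, (-c) ^ j * q ^ (m j)) +
      (-c) ^ N * q ^ (m N) * x (g N) := by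
    intro N
    induction N with
    | zero =>
      simp only [Finset.range_zero, Finset.sum_empty, pow_zero, hm0, one_mul, zero_add]
      have : g 0 = 0 := by simp only [hg, hm0]
      rw [this, hx0]
    | succ N ih =>
      rw [Finset.sum_range_succ]
      have hpow : q ^ (m N) * q ^ (m (N + 1) - m N) = q ^ (m (N + 1)) := by
        rw [← pow_add]
        congr 1
        have := hmono (by omega : N ≤ N + 1)
        omega
      calc β = (∑ j ∈ Finset.range N, (-c) ^ j * q ^ (m j)) +
          (-c) ^ N * q ^ (m N) * x (g N) := ih
        _ = (∑ j ∈ Finset.range N, (-c) ^ j * q ^ (m j)) +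
          (-c) ^ N * q ^ (m N) * (1 - c * (q ^ (m (N + 1) - m N) * x (g (N + 1)))) := by
            rw [← hrec N]
        _ = ((∑ j ∈ Finset.range N, (-c) ^ j * q ^ (m j)) + (-c) ^ N * q ^ (m N)) +
          (-c) ^ (N + 1) * (q ^ (m N) * q ^ (m (N + 1) - m N)) * x (g (N + 1)) := by
            ring
        _ = _ := by rw [hpow]
  -- the series
  set a : ℕ → ℝ := fun j => (-c) ^ j * q ^ (m j) with ha
  have habs : ∀ j, ‖a j‖ ≤ c ^ j := by
    intro j
    have hq01 : q ^ (m j) ≤ 1 := pow_le_one₀ (le_of_lt hq0) (le_of_lt hq1)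
    have : ‖a j‖ = c ^ j * q ^ (m j) := by
      rw [ha]
      simp only [norm_mul, norm_pow, norm_neg, Real.norm_eq_abs,
        abs_of_pos hc0, abs_of_pos hq0]
    rw [this]
    nlinarith [pow_pos hc0 j, pow_pos hq0 (m j)]
  have hsummable : Summable a :=
    Summable.of_norm_bounded (summable_geometric_of_lt_one (le_of_lt hc0) hc1) habs
  -- remainder tends to zero
  have hrem : Filter.Tendsto (fun N => (-c) ^ N * q ^ (m N) * x (g N))
      Filter.atTop (nhds 0) := by
    refine squeeze_zero_norm (fun N => ?_)
      (tendsto_pow_atTop_nhds_zero_of_lt_one (le_of_lt hc0) hc1)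
    · 
      have h1 : ‖(-c) ^ N * q ^ (m N)‖ ≤ c ^ N := habs N
      have h2 : ‖x (g N)‖ ≤ 1 := by
        rw [Real.norm_eq_abs, abs_le]
        exact ⟨by linarith [(hbound (g N)).1], (hbound (g N)).2⟩
      calc ‖(-c) ^ N * q ^ (m N) * x (g N)‖
          = ‖(-c) ^ N * q ^ (m N)‖ * ‖x (g N)‖ := norm_mul _ _
        _ ≤ c ^ N * 1 := mul_le_mul h1 h2 (norm_nonneg _) (pow_nonneg (le_of_lt hc0) N)
        _ = c ^ N := mul_one _
  have hpartial : Filter.Tendsto (fun N => ∑ j ∈ Finset.range N, a j)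
      Filter.atTop (nhds β) := by
    have heq : (fun N => ∑ j ∈ Finset.range N, a j) =
        fun N => β - (-c) ^ N * q ^ (m N) * x (g N) := by
      funext N
      have := hkey N
      simp only [ha]
      linarith
    rw [heq]
    have := Filter.Tendsto.sub (tendsto_const_nhds (x := β) (f := Filter.atTop)) hrem
    simpa using this
  have htsum : ∑' j, a j = β :=
    tendsto_nhds_unique hsummable.hasSum.tendsto_sum_nat hpartial
  have hzero : ∑' j, a j = a 0 + ∑' k, a (k + 1) := Summable.tsum_eq_zero_add hsummable
  have ha0 : a 0 = 1 := by simp [ha, hm0]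
  have htail : ∑' k, a (k + 1) = β - 1 := by
    rw [htsum, ha0] at hzero
    linarith
  have hnc : (α - 1) / β = -c := by
    rw [hc]; ring
  unfold theta
  rw [hnc]
  have : ∑' (k : ℕ), (-c) ^ (k + 1) * (α / β) ^ m (k + 1) = β - 1 := by
    rw [← htail]
  rw [this]
  ring
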